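/- Let M ⊆ ℝ^m be a Lebesgue measurable set, let (p_n)_{n∈ℕ} and p be bounded measurable variable exponents on M with p_n(x) → p(x) as n → ∞ for a.e. x ∈ M, and let u : M → ℝ^ℓ be measurable. Then ‖u‖_{p(·),M} ≤ liminf_{n→∞} ‖u‖_{p_n(·),M}, where ‖·‖_{r(·),M} is the Luxemburg norm. -/

import Mathlib

open MeasureTheory ENNReal

/-- The modular `ρ_{r(·),M}(u) = ∫_M |u(x)|^{r(x)} dx` (as an extended nonnegative real). -/
noncomputable def modular {E : Type*} [MeasurableSpace E] (μ : Measure E)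
    (M : Set E) (r : E → ℝ) (u : E → ℝ) : ℝ≥0∞ :=
  ∫⁻ x in M, ENNReal.ofReal (|u x| ^ (r x)) ∂μ

/-- The Luxemburg norm `‖u‖_{r(·),M} = inf{λ > 0 : ρ_{r(·),M}(u/λ) ≤ 1}`
(with value `∞` if no such `λ` exists). -/
noncomputable def luxNorm {E : Type*} [MeasurableSpace E] (μ : Measure E)
    (M : Set E) (r : E → ℝ) (u : E → ℝ) : ℝ≥0∞ :=
  sInf {c : ℝ≥0∞ | ∃ lam : ℝ, 0 < lam ∧ c = ENNReal.ofReal lam ∧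
    modular μ M r (fun x => u x / lam) ≤ 1}

/-- The modular is antitone in the scaling parameter (for exponents `≥ 1` on `M`). -/
lemma modular_anti {E : Type*} [MeasurableSpace E] (μ : Measure E)
    (M : Set E) (hM : MeasurableSet M) (r : E → ℝ) (hr : ∀ x ∈ M, 1 ≤ r x)
    (u : E → ℝ) {lam lam' : ℝ} (h0 : 0 < lam') (hle : lam' ≤ lam) :
    modular μ M r (fun x => u x / lam) ≤ modular μ M r (fun x => u x / lam') := by
  unfold modular
  refine lintegral_mono_ae ?_
  filter_upwards [ae_restrict_mem hM] with x hx
  have h0' : 0 < lam := h0.trans_le hle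
  refine ENNReal.ofReal_le_ofReal ?_
  refine Real.rpow_le_rpow (abs_nonneg _) ?_ (le_trans zero_le_one (hr x hx))
  rw [abs_div, abs_div, abs_of_pos h0, abs_of_pos h0']
  exact div_le_div_of_nonneg_left (abs_nonneg _) h0 hle

theorem stmt_17 {m : ℕ} (M : Set (EuclideanSpace ℝ (Fin m))) (hMmeas : MeasurableSet M)
    (pn : ℕ → EuclideanSpace ℝ (Fin m) → ℝ) (p : EuclideanSpace ℝ (Fin m) → ℝ)
    (hpn : ∀ n, Measurable (pn n)) (hp : Measurable p)
    (hpn1 : ∀ n, ∀ x ∈ M, 1 ≤ pn n x) (hp1 : ∀ x ∈ M, 1 ≤ p x)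
    (hpnbdd : ∀ n, ∃ C, ∀ x ∈ M, pn n x ≤ C) (hpbdd : ∃ C, ∀ x ∈ M, p x ≤ C)
    (hconv : ∀ᵐ x ∂(volume.restrict M),
      Filter.Tendsto (fun n => pn n x) Filter.atTop (nhds (p x)))
    (u : EuclideanSpace ℝ (Fin m) → ℝ) (hu : Measurable u) :
    luxNorm volume M p u ≤ Filter.liminf (fun n => luxNorm volume M (pn n) u) Filter.atTop := by
  by_contra h
  push_neg at h
  obtain ⟨d, hLd, hdlux⟩ := exists_between h
  have hdfin : d ≠ ∞ := hdlux.ne_top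
  have hdpos : 0 < d := lt_of_le_of_lt zero_le hLd
  set lam : ℝ := d.toReal with hlamdef
  have hlampos : 0 < lam := ENNReal.toReal_pos hdpos.ne' hdfin
  have hdlam : d = ENNReal.ofReal lam := (ENNReal.ofReal_toReal hdfin).symm
  -- frequently, the Luxemburg norm of `pn n` is below `d`
  have hfreq : ∃ᶠ n in Filter.atTop, luxNorm volume M (pn n) u < d :=
    Filter.frequently_lt_of_liminf_lt (by isBoundedDefault) hLd
  have hfreq2 : ∃ᶠ n in Filter.atTop,
      modular volume M (pn n) (fun x => u x / lam) ≤ 1 := by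
    refine hfreq.mono fun n hn => ?_
    obtain ⟨c, hcS, hcd⟩ := sInf_lt_iff.mp hn
    obtain ⟨lam', hlam', rfl, hmod⟩ := hcS
    have hlt : lam' ≤ lam := by
      rw [hdlam, ENNReal.ofReal_lt_ofReal_iff hlampos] at hcd
      exact hcd.le
    exact (modular_anti volume M hMmeas (pn n) (hpn1 n) u hlam' hlt).trans hmod
  have hliminf : Filter.liminf
      (fun n => modular volume M (pn n) (fun x => u x / lam)) Filter.atTop ≤ 1 :=
    Filter.liminf_le_of_frequently_le' hfreq2
  -- Fatou
  have hmeas : ∀ n, Measurable fun x => ENNReal.ofReal (|u x / lam| ^ pn n x) := by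
    intro n
    exact ENNReal.measurable_ofReal.comp ((hu.div_const lam).abs.pow (hpn n))
  have hfatou : modular volume M p (fun x => u x / lam) ≤
      Filter.liminf (fun n => modular volume M (pn n) (fun x => u x / lam)) Filter.atTop := by
    have hae : (fun x => ENNReal.ofReal (|u x / lam| ^ p x)) =ᵐ[volume.restrict M]
        fun x => Filter.liminf (fun n => ENNReal.ofReal (|u x / lam| ^ pn n x)) Filter.atTop := by
      filter_upwards [hconv, ae_restrict_mem hMmeas] with x hx hxM
      have hy : (0:ℝ) < p x := lt_of_lt_of_le one_pos (hp1 x hxM)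
      have htend : Filter.Tendsto (fun n => ENNReal.ofReal (|u x / lam| ^ pn n x))
          Filter.atTop (nhds (ENNReal.ofReal (|u x / lam| ^ p x))) := by
        exact (ENNReal.continuous_ofReal.tendsto _).comp
          (Filter.Tendsto.rpow tendsto_const_nhds hx (Or.inr hy))
      exact htend.liminf_eq.symm
    calc modular volume M p (fun x => u x / lam)
        = ∫⁻ x in M, Filter.liminf
            (fun n => ENNReal.ofReal (|u x / lam| ^ pn n x)) Filter.atTop :=
          lintegral_congr_ae hae
      _ ≤ Filter.liminf
            (fun n => modular volume M (pn n) (fun x => u x / lam)) Filter.atTop :=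
          lintegral_liminf_le fun n => hmeas n
  have hmem : d ∈ {c : ℝ≥0∞ | ∃ l : ℝ, 0 < l ∧ c = ENNReal.ofReal l ∧
      modular volume M p (fun x => u x / l) ≤ 1} :=
    ⟨lam, hlampos, hdlam, hfatou.trans hliminf⟩
  have : luxNorm volume M p u ≤ d := by
    rw [luxNorm]; exact sInf_le hmem
  exact absurd this hdlux.not_ge
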